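/- Let U = {u ∈ ℝᵐ : u̲ ≤ u ≤ ū} be a nondegenerate compact box, let ε ∈ [0,1], let δ ∈ (0, min_{1≤j≤m} (ū(j) − u̲(j))/2), and let λ > 1. Suppose f : ℝⁿ × ℝᵐ → ℝⁿ is continuous, v : ℝⁿ → ℝ is continuous and bounded on X̂, and ũ₀ : ℝⁿ → ℝᵐ satisfies u̲ + δ ≤ ũ₀(x) ≤ ū − δ componentwise for every x ∈ X\T. Set Z = (1−ε)(2δ)^m + ε ∏_{j=1}^m (ū(j) − u̲(j)). If for every x ∈ X\T it holds that (1−ε)/Z · ∫_{[ũ₀(x)−δ, ũ₀(x)+δ]} v(f(x,u)) du + ε/Z · ∫_{[u̲, ū]} v(f(x,u)) du ≥ λ·v(x) (Lebesgue integrals over the boxes), and v(x) ≤ 0 for every x ∈ X̂\X, then the set {x ∈ X : v(x) > 0} is a controlled reach-avoid set: for every x₀ ∈ X with v(x₀) > 0 there exist a control policy π and k ∈ ℕ with φ^π_{x₀}(k) ∈ T and φ^π_{x₀}(t) ∈ X for all 0 ≤ t ≤ k. -/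

import Mathlib

open MeasureTheory Set

noncomputable section

/-- Trajectory of the discrete-time control system `x(t+1) = f(x(t), u(t))`. -/
def traj {n m : ℕ} (f : (Fin n → ℝ) → (Fin m → ℝ) → (Fin n → ℝ))
    (x0 : Fin n → ℝ) (π : ℕ → (Fin m → ℝ)) : ℕ → (Fin n → ℝ)
  | 0 => x0
  | t + 1 => f (traj f x0 π t) (π t)

/-- Proposition 3 (ε-greedy condition): the mixed-distribution
Lyapunov-like condition yields a controlled reach-avoid set. -/
theorem stmt_8 {n m : ℕ} (lo hi : Fin m → ℝ) (hbox : ∀ j, lo j < hi j)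
    (ε : ℝ) (hε0 : 0 ≤ ε) (hε1 : ε ≤ 1)
    (δ : ℝ) (hδ0 : 0 < δ) (hδ : ∀ j, δ < (hi j - lo j) / 2)
    (lam : ℝ) (hlam : 1 < lam)
    (f : (Fin n → ℝ) → (Fin m → ℝ) → (Fin n → ℝ))
    (hf : Continuous fun p : (Fin n → ℝ) × (Fin m → ℝ) => f p.1 p.2)
    (X T Xhat : Set (Fin n → ℝ))
    (hXo : IsOpen X) (hXb : Bornology.IsBounded X)
    (hTo : IsOpen T) (hTb : Bornology.IsBounded T) (hTX : T ⊆ X)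
    (hXhat1 : ∀ x ∈ X, ∀ u ∈ Set.Icc lo hi, f x u ∈ Xhat) (hXhat2 : X ⊆ Xhat)
    (v : (Fin n → ℝ) → ℝ) (hvc : Continuous v)
    (hvb : ∃ M : ℝ, ∀ x ∈ Xhat, |v x| ≤ M)
    (tu0 : (Fin n → ℝ) → (Fin m → ℝ))
    (htu0 : ∀ x ∈ X \ T, ∀ j, lo j + δ ≤ tu0 x j ∧ tu0 x j ≤ hi j - δ)
    (Z : ℝ) (hZ : Z = (1 - ε) * (2 * δ) ^ m + ε * ∏ j, (hi j - lo j))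
    (h1 : ∀ x ∈ X \ T,
      lam * v x ≤
        (1 - ε) / Z *
            (∫ u in Set.Icc (fun j => tu0 x j - δ) (fun j => tu0 x j + δ),
              v (f x u)) +
          ε / Z * ∫ u in Set.Icc lo hi, v (f x u))
    (h2 : ∀ x ∈ Xhat \ X, v x ≤ 0) :
    ∀ x0 ∈ X, 0 < v x0 →
      ∃ π : ℕ → (Fin m → ℝ), (∀ t, π t ∈ Set.Icc lo hi) ∧
        ∃ k : ℕ, traj f x0 π k ∈ T ∧ ∀ t ≤ k, traj f x0 π t ∈ X := by
  intro x0 hx0 hv0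
  have hlohi : lo ≤ hi := fun j => (hbox j).le
  have hprod : 0 < ∏ j, (hi j - lo j) :=
    Finset.prod_pos fun j _ => sub_pos.mpr (hbox j)
  have h2δ : 0 < (2 * δ) ^ m := pow_pos (by linarith) m
  have hZpos : 0 < Z := by
    rcases eq_or_lt_of_le hε1 with h | h
    · rw [hZ, h]; simpa using hprod
    · rw [hZ]
      nlinarith [mul_nonneg hε0 hprod.le]
  -- Claim A: greedy choice of a good control
  have claimA : ∀ x ∈ X \ T, ∃ u ∈ Set.Icc lo hi, lam * v x ≤ v (f x u) := by
    intro x hx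
    have hcont : ContinuousOn (fun u => v (f x u)) (Set.Icc lo hi) :=
      (hvc.comp (hf.comp (Continuous.prodMk_right x))).continuousOn
    obtain ⟨umax, humax, hmax⟩ :=
      isCompact_Icc.exists_isMaxOn (Set.nonempty_Icc.mpr hlohi) hcont
    refine ⟨umax, humax, ?_⟩
    set C := v (f x umax) with hC
    -- inner box is inside the big box
    have hsub : Set.Icc (fun j => tu0 x j - δ) (fun j => tu0 x j + δ) ⊆
        Set.Icc lo hi := by
      apply Set.Icc_subset_Icc
      · intro j; have := (htu0 x hx j).1; simp; linarith
      · intro j; have := (htu0 x hx j).2; simp; linarith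
    have hint2 : IntegrableOn (fun u => v (f x u)) (Set.Icc lo hi) :=
      hcont.integrableOn_compact isCompact_Icc
    have hint1 : IntegrableOn (fun u => v (f x u))
        (Set.Icc (fun j => tu0 x j - δ) (fun j => tu0 x j + δ)) :=
      (hcont.mono hsub).integrableOn_compact isCompact_Icc
    have hb1 : (∫ u in Set.Icc (fun j => tu0 x j - δ) (fun j => tu0 x j + δ),
        v (f x u)) ≤ (2 * δ) ^ m * C := by
      have hle : (fun j => tu0 x j - δ) ≤ fun j => tu0 x j + δ := by
        intro j; simp; linarith
      calc (∫ u in Set.Icc (fun j => tu0 x j - δ) (fun j => tu0 x j + δ),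
            v (f x u))
          ≤ ∫ _u in Set.Icc (fun j => tu0 x j - δ) (fun j => tu0 x j + δ),
            C := by
            exact setIntegral_mono_on hint1
              (integrableOn_const isCompact_Icc.measure_lt_top.ne)
              measurableSet_Icc (fun u hu => hmax (hsub hu))
        _ = (2 * δ) ^ m * C := by
            have heq : ∀ j : Fin m, tu0 x j + δ - (tu0 x j - δ) = 2 * δ :=
              fun j => by ring
            rw [setIntegral_const, measureReal_def, Real.volume_Icc_pi_toReal hle, smul_eq_mul]
            simp only [heq]
            rw [Finset.prod_const, Finset.card_univ, Fintype.card_fin]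
    have hb2 : (∫ u in Set.Icc lo hi, v (f x u)) ≤ (∏ j, (hi j - lo j)) * C := by
      calc (∫ u in Set.Icc lo hi, v (f x u))
          ≤ ∫ _u in Set.Icc lo hi, C := by
            exact setIntegral_mono_on hint2
              (integrableOn_const isCompact_Icc.measure_lt_top.ne)
              measurableSet_Icc (fun u hu => hmax hu)
        _ = (∏ j, (hi j - lo j)) * C := by
            rw [setIntegral_const, measureReal_def, Real.volume_Icc_pi_toReal hlohi, smul_eq_mul]
    have hc1 : 0 ≤ (1 - ε) / Z := div_nonneg (by linarith) hZpos.le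
    have hc2 : 0 ≤ ε / Z := div_nonneg hε0 hZpos.le
    have := h1 x hx
    have hfin : (1 - ε) / Z * ((2 * δ) ^ m * C)
        + ε / Z * ((∏ j, (hi j - lo j)) * C) = C := by
      field_simp
      rw [hZ]; ring
    calc lam * v x
        ≤ (1 - ε) / Z *
            (∫ u in Set.Icc (fun j => tu0 x j - δ) (fun j => tu0 x j + δ),
              v (f x u)) + ε / Z * ∫ u in Set.Icc lo hi, v (f x u) := this
      _ ≤ (1 - ε) / Z * ((2 * δ) ^ m * C)
            + ε / Z * ((∏ j, (hi j - lo j)) * C) := by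
          gcongr
      _ = C := hfin
  -- greedy selector
  classical
  set g : (Fin n → ℝ) → (Fin m → ℝ) := fun x =>
    if h : x ∈ X \ T then (claimA x h).choose else lo with hg
  have hgmem : ∀ x, g x ∈ Set.Icc lo hi := by
    intro x
    by_cases h : x ∈ X \ T
    · simp only [hg, dif_pos h]; exact (claimA x h).choose_spec.1
    · simp only [hg, dif_neg h]; exact ⟨le_refl lo, hlohi⟩
  have hggood : ∀ x (h : x ∈ X \ T), lam * v x ≤ v (f x (g x)) := by
    intro x h
    simp only [hg, dif_pos h]
    exact (claimA x h).choose_spec.2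
  -- the trajectory
  set xs : ℕ → (Fin n → ℝ) := fun t => Nat.rec x0 (fun _ y => f y (g y)) t
    with hxs
  set π : ℕ → (Fin m → ℝ) := fun t => g (xs t) with hπ
  have htraj : ∀ t, traj f x0 π t = xs t := by
    intro t
    induction t with
    | zero => rfl
    | succ t ih => show f (traj f x0 π t) (π t) = xs (t + 1); exact congrArg (fun y => f y (π t)) ih
  obtain ⟨M, hM⟩ := hvb
  -- invariant
  have lemB : ∀ t, (∀ s < t, xs s ∉ T) → xs t ∈ X ∧ lam ^ t * v x0 ≤ v (xs t) := by
    intro t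
    induction t with
    | zero =>
      intro _
      exact ⟨hx0, by simp only [pow_zero, one_mul]; exact le_rfl⟩
    | succ t ih =>
      intro hnot
      obtain ⟨hXt, hvt⟩ := ih fun s hs => hnot s (hs.trans (Nat.lt_succ_self t))
      have hmem : xs t ∈ X \ T := ⟨hXt, hnot t (Nat.lt_succ_self t)⟩
      have hvpos : 0 < v (xs t) :=
        lt_of_lt_of_le (mul_pos (pow_pos (by linarith) t) hv0) hvt
      have hstep : lam * v (xs t) ≤ v (xs (t + 1)) := hggood _ hmem
      have hnext : xs (t + 1) ∈ Xhat := hXhat1 _ hXt _ (hgmem (xs t))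
      have hvnext : 0 < v (xs (t + 1)) :=
        lt_of_lt_of_le (by nlinarith) hstep
      have hXnext : xs (t + 1) ∈ X := by
        by_contra h
        exact absurd (h2 _ ⟨hnext, h⟩) (not_le.mpr hvnext)
      refine ⟨hXnext, ?_⟩
      calc lam ^ (t + 1) * v x0 = lam * (lam ^ t * v x0) := by ring
        _ ≤ lam * v (xs t) := by nlinarith
        _ ≤ v (xs (t + 1)) := hstep
  -- eventually must hit T
  obtain ⟨N, hN⟩ := pow_unbounded_of_one_lt (M / v x0) hlam
  have hMN : M < lam ^ N * v x0 := by
    rw [div_lt_iff₀ hv0] at hN; linarith [hN]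
  have hhit : ∃ s, xs s ∈ T := by
    by_contra h
    push_neg at h
    obtain ⟨hXN, hvN⟩ := lemB N fun s _ => h s
    have := hM _ (hXhat2 hXN)
    have := abs_le.mp this
    linarith [this.2]
  set k := Nat.find hhit with hk
  refine ⟨π, fun t => hgmem _, k, ?_, ?_⟩
  · rw [htraj]; exact Nat.find_spec hhit
  · intro t ht
    rw [htraj]
    exact (lemB t fun s hs => Nat.find_min hhit (lt_of_lt_of_le hs ht)).1
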